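/- Let k be a natural number and let R be an ℕ^k-graded ring with grading 𝒜 : (Fin k → ℕ) → AddSubgroup R. Assume R is semi-commutative: for all a, b ∈ R, a * b = 0 implies a * r * b = 0 for every r ∈ R. Let (f_i)_{i ∈ I} be a family of elements of R and suppose there exists a non-zero g ∈ R with f_i * g = 0 for all i ∈ I. Then there exist v ∈ Fin k → ℕ and a non-zero homogeneous element h ∈ 𝒜 v such that f_i * h = 0 for all i ∈ I. -/

import Mathlib

set_option synthInstance.maxHeartbeats 1000000
set_option maxHeartbeats 4000000

/-- Let `R` be a semi-commutative `ℕ^k`-graded ring (`a * b = 0` implies `a * r * b = 0`),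
and `(f i)_{i ∈ ι}` a family of elements of `R` admitting a common non-zero right
annihilator `g`.  Then the family admits a common non-zero *homogeneous* right
annihilator `h`. -/
theorem exists_homogeneous_annihilator_of_family
    {k : ℕ} {R : Type*} [Ring R] (𝒜 : (Fin k → ℕ) → AddSubgroup R) [GradedRing 𝒜]
    (hsc : ∀ a b : R, a * b = 0 → ∀ r : R, a * r * b = 0)
    {ι : Type*} (f : ι → R)
    (g : R) (hg : g ≠ 0) (hfg : ∀ i : ι, f i * g = 0) :
    ∃ (v : Fin k → ℕ) (h : R), h ∈ 𝒜 v ∧ h ≠ 0 ∧ ∀ i : ι, f i * h = 0 := by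
  classical
  haveI hwf : WellFoundedLT (Fin k) := inferInstance
  letI : LinearOrder (Lex (Fin k → ℕ)) := linearOrderOfSTO (· < ·)
  have toLex_add : ∀ a b : Fin k → ℕ, toLex (a + b) = toLex a + toLex b := fun _ _ => rfl
  -- choose a non-zero common annihilator with support of minimal size
  have hP : ∃ n : ℕ, ∃ g' : R, g' ≠ 0 ∧ (∀ i, f i * g' = 0) ∧
      (DirectSum.decompose 𝒜 g').support.card = n := ⟨_, g, hg, hfg, rfl⟩
  obtain ⟨g₀, hg₀, hfg₀, hcard⟩ := Nat.find_spec hP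
  have hmin : ∀ g' : R, g' ≠ 0 → (∀ i, f i * g' = 0) →
      Nat.find hP ≤ (DirectSum.decompose 𝒜 g').support.card :=
    fun g' h1 h2 => Nat.find_min' hP ⟨g', h1, h2, rfl⟩
  -- the support of g₀ is nonempty; take its lexicographically maximal element v
  have hsupp_ne : (DirectSum.decompose 𝒜 g₀).support.Nonempty := by
    rw [Finset.nonempty_iff_ne_empty]
    intro h
    apply hg₀
    have h2 : DirectSum.decompose 𝒜 g₀ = 0 := DFinsupp.support_eq_empty.1 h
    have h3 := congrArg (DirectSum.decompose 𝒜).symm h2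
    simpa using h3
  obtain ⟨v, hv_mem, hv_max⟩ := (DirectSum.decompose 𝒜 g₀).support.exists_max_image toLex hsupp_ne
  -- key step : if all lexicographically larger components of `f i` kill `g₀`, so does
  -- the component in degree `w`
  have key : ∀ i : ι, ∀ w : Fin k → ℕ,
      (∀ w', toLex w < toLex w' → (DirectSum.decompose 𝒜 (f i) w' : R) * g₀ = 0) →
      (DirectSum.decompose 𝒜 (f i) w : R) * g₀ = 0 := by
    intro i w IH
    set a : R := (DirectSum.decompose 𝒜 (f i) w : R) with ha
    have ha_mem : a ∈ 𝒜 w := SetLike.coe_mem _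
    -- Step 1 : a kills the top component of g₀
    have step1 : a * (DirectSum.decompose 𝒜 g₀ v : R) = 0 := by
      by_cases hwmem : w ∈ (DirectSum.decompose 𝒜 (f i)).support
      swap
      · have hz : a = 0 := by
          rw [ha, DFinsupp.notMem_support_iff.1 hwmem]; simp
        rw [hz, zero_mul]
      have h0 : (DirectSum.decompose 𝒜 (f i * g₀) (w + v) : R) = 0 := by
        rw [hfg₀ i]; simp
      have hsum : f i * g₀ = ∑ w' ∈ (DirectSum.decompose 𝒜 (f i)).support,
          (DirectSum.decompose 𝒜 (f i) w' : R) * g₀ := by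
        conv_lhs => rw [← DirectSum.sum_support_decompose 𝒜 (f i)]
        rw [Finset.sum_mul]
      rw [hsum, DirectSum.decompose_sum, DFinsupp.finset_sum_apply,
        AddSubmonoidClass.coe_finset_sum, Finset.sum_eq_single_of_mem w hwmem] at h0
      · rw [← h0]
        exact (DirectSum.coe_decompose_mul_add_of_left_mem 𝒜 ha_mem).symm
      · intro w' hw' hne
        rcases lt_or_gt_of_ne (fun h : toLex w' = toLex w => hne (toLex.injective h)) with hlt | hgt
        · -- toLex w' < toLex w
          by_cases hle : w' ≤ w + v
          · rw [DirectSum.coe_decompose_mul_of_left_mem_of_le 𝒜 (SetLike.coe_mem _) hle]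
            have hnot : (w + v) - w' ∉ (DirectSum.decompose 𝒜 g₀).support := by
              intro hmem
              have h1 : toLex ((w + v) - w') ≤ toLex v := hv_max _ hmem
              have h2 : toLex (w' + ((w + v) - w')) < toLex (w + v) := by
                rw [toLex_add w' _, toLex_add w v]
                rcases h1.lt_or_eq with h1' | h1'
                · exact add_lt_add hlt h1'
                · rw [h1']
                  exact add_lt_add_of_lt_of_le hlt le_rfl
              rw [add_tsub_cancel_of_le hle] at h2
              exact lt_irrefl _ h2
            rw [DFinsupp.notMem_support_iff.1 hnot]
            simp
          · exact DirectSum.coe_decompose_mul_of_left_mem_of_not_le 𝒜 (SetLike.coe_mem _) hle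
        · -- toLex w < toLex w'
          rw [IH w' hgt]
          simp
    -- Step 2 : a * g₀ is a common annihilator of smaller support, hence zero
    by_cases haz : a * g₀ = 0
    · exact haz
    exfalso
    have hann : ∀ j, f j * (a * g₀) = 0 := by
      intro j
      rw [← mul_assoc]
      exact hsc (f j) g₀ (hfg₀ j) a
    have hsub : (DirectSum.decompose 𝒜 (a * g₀)).support ⊆
        (((DirectSum.decompose 𝒜 g₀).support.erase v).image (fun u => w + u)) := by
      intro n hn
      have hne : (DirectSum.decompose 𝒜 (a * g₀) n : R) ≠ 0 := by
        intro h
        exact DFinsupp.mem_support_iff.1 hn (ZeroMemClass.coe_eq_zero.mp h)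
      by_cases hle : w ≤ n
      · have heq : (DirectSum.decompose 𝒜 (a * g₀) n : R) =
            a * (DirectSum.decompose 𝒜 g₀ (n - w) : R) :=
          DirectSum.coe_decompose_mul_of_left_mem_of_le 𝒜 ha_mem hle
        have h1 : n - w ∈ (DirectSum.decompose 𝒜 g₀).support := by
          by_contra h
          apply hne
          rw [heq, DFinsupp.notMem_support_iff.1 h]
          simp
        have h2 : n - w ≠ v := by
          intro h
          apply hne
          rw [heq, h, step1]
        exact Finset.mem_image.2 ⟨n - w, Finset.mem_erase.2 ⟨h2, h1⟩,
          by rw [add_tsub_cancel_of_le hle]⟩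
      · exact absurd (DirectSum.coe_decompose_mul_of_left_mem_of_not_le 𝒜 ha_mem hle) hne
    have hlt : (DirectSum.decompose 𝒜 (a * g₀)).support.card < Nat.find hP := by
      have h1 := Finset.card_le_card hsub
      have h2 := Finset.card_image_le
        (s := (DirectSum.decompose 𝒜 g₀).support.erase v) (f := fun u => w + u)
      have h3 := Finset.card_erase_of_mem hv_mem
      have h4 : 0 < (DirectSum.decompose 𝒜 g₀).support.card := Finset.card_pos.2 ⟨v, hv_mem⟩
      omega
    exact absurd (hmin _ haz hann) (not_le.2 hlt)
  -- every homogeneous component of every `f i` kills `g₀`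
  have claimA : ∀ i w, (DirectSum.decompose 𝒜 (f i) w : R) * g₀ = 0 := by
    intro i
    have H : ∀ N : ℕ, ∀ w : Fin k → ℕ,
        ((DirectSum.decompose 𝒜 (f i)).support.filter (fun w' => toLex w < toLex w')).card ≤ N →
        (DirectSum.decompose 𝒜 (f i) w : R) * g₀ = 0 := by
      intro N
      induction N with
      | zero =>
        intro w hw
        apply key i w
        intro w' hww'
        have hnm : w' ∉ (DirectSum.decompose 𝒜 (f i)).support := by
          intro hm
          have hmf : w' ∈ (DirectSum.decompose 𝒜 (f i)).support.filter
              (fun x => toLex w < toLex x) := Finset.mem_filter.2 ⟨hm, hww'⟩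
          have := Finset.card_pos.2 ⟨w', hmf⟩
          omega
        rw [DFinsupp.notMem_support_iff.1 hnm]
        simp
      | succ N ih =>
        intro w hw
        apply key i w
        intro w' hww'
        by_cases hm : w' ∈ (DirectSum.decompose 𝒜 (f i)).support
        · apply ih
          have hw'mem : w' ∈ (DirectSum.decompose 𝒜 (f i)).support.filter
              (fun x => toLex w < toLex x) := Finset.mem_filter.2 ⟨hm, hww'⟩
          have hsub : (DirectSum.decompose 𝒜 (f i)).support.filter
                (fun x => toLex w' < toLex x) ⊆
              ((DirectSum.decompose 𝒜 (f i)).support.filter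
                (fun x => toLex w < toLex x)).erase w' := by
            intro x hx
            obtain ⟨hxs, hx2⟩ := Finset.mem_filter.1 hx
            refine Finset.mem_erase.2 ⟨?_, Finset.mem_filter.2 ⟨hxs, lt_trans hww' hx2⟩⟩
            intro h
            rw [h] at hx2
            exact lt_irrefl _ hx2
          have h1 := Finset.card_le_card hsub
          rw [Finset.card_erase_of_mem hw'mem] at h1
          have h2 : 0 < ((DirectSum.decompose 𝒜 (f i)).support.filter
              (fun x => toLex w < toLex x)).card := Finset.card_pos.2 ⟨w', hw'mem⟩
          omega
        · rw [DFinsupp.notMem_support_iff.1 hm]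
          simp
    exact fun w => H _ w le_rfl
  -- conclusion : the top component of g₀ is the desired homogeneous annihilator
  refine ⟨v, (DirectSum.decompose 𝒜 g₀ v : R), SetLike.coe_mem _, ?_, ?_⟩
  · intro h
    exact DFinsupp.mem_support_iff.1 hv_mem (ZeroMemClass.coe_eq_zero.mp h)
  · intro i
    conv_lhs => rw [← DirectSum.sum_support_decompose 𝒜 (f i)]
    rw [Finset.sum_mul]
    apply Finset.sum_eq_zero
    intro w _
    have h1 := claimA i w
    have h2 := DirectSum.coe_decompose_mul_add_of_left_mem 𝒜
      (SetLike.coe_mem (DirectSum.decompose 𝒜 (f i) w)) (b := g₀) (j := v)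
    rw [h1] at h2
    simpa using h2.symm
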